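/- Fix n ≥ 4, ρ ∈ [0,1] and d_n > 0. Then for every function f : Ω_n → ℝ: √n ∫ (η(1) − η(2)) f(η) dν_ρ(η) − n² (d_n/2) ∫ (f(η^{1↔2}) − f(η))² dν_ρ(η) ≤ ρ/(2 d_n n). In particular, sup_f { √n ∫ (η(1) − η(2)) f dν_ρ − n² (d_n/2) ∫ (f∘(·)^{1↔2} − f)² dν_ρ } ≤ ρ/(2 d_n n), the supremum being over all f : Ω_n → ℝ. -/

import Mathlib

noncomputable section

open Finset

/-- `η^{1→n−1}`: remove the top card and insert it at position `n−1`.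
Positions are labelled by `ZMod n`, with position `n` corresponding to `0`
and position `n−1` to `-1`. -/
def mapA {n : ℕ} (η : ZMod n → Fin 2) : ZMod n → Fin 2 :=
  fun x => if x = 0 then η 0 else if x = -1 then η 1 else η (x + 1)

/-- `η^{1→n}`: remove the top card and insert it at the bottom,
i.e. `η^{1→n}(x) = η(x+1)` cyclically. -/
def mapB {n : ℕ} (η : ZMod n → Fin 2) : ZMod n → Fin 2 :=
  fun x => η (x + 1)

/-- `η^{n→1}`: remove the bottom card and insert it at the top,
i.e. `η^{n→1}(x) = η(x−1)` cyclically. -/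
def mapC {n : ℕ} (η : ZMod n → Fin 2) : ZMod n → Fin 2 :=
  fun x => η (x - 1)

/-- `η^{1↔2}`: transpose the coordinates at positions `1` and `2`. -/
def mapD {n : ℕ} (η : ZMod n → Fin 2) : ZMod n → Fin 2 :=
  fun x => if x = 1 then η 2 else if x = 2 then η 1 else η x

/-- The particle-system generator `𝓛ₙ`. -/
def gen {n : ℕ} (a b c d : ℝ) (f : (ZMod n → Fin 2) → ℝ) (η : ZMod n → Fin 2) : ℝ :=
  a * (f (mapA η) - f η) + b * (f (mapB η) - f η)
    + c * (f (mapC η) - f η) + d * (f (mapD η) - f η)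

/-- The Bernoulli product measure `ν_ρ` on `Ω_n = {0,1}^{ℤ_n}`. -/
def nuMeasure {n : ℕ} [NeZero n] (ρ : ℝ) (η : ZMod n → Fin 2) : ℝ :=
  ∏ x : ZMod n, (ρ * ((η x : ℕ) : ℝ) + (1 - ρ) * (1 - ((η x : ℕ) : ℝ)))

/-- `∫ F dν_ρ = ∑_η ν_ρ(η) F(η)`. -/
def integral {n : ℕ} [NeZero n] (ρ : ℝ) (F : (ZMod n → Fin 2) → ℝ) : ℝ :=
  ∑ η : ZMod n → Fin 2, nuMeasure ρ η * F η


/-!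
STATEMENT 14.  Kipnis–Varadhan-type variational bound: for `d_n > 0` and every
`f : Ω_n → ℝ`,
`√n ∫(η(1)−η(2)) f dν_ρ − n²(d_n/2) ∫(f∘(·)^{1↔2} − f)² dν_ρ ≤ ρ/(2 d_n n)`,
hence the supremum over all `f` is bounded by `ρ/(2 d_n n)`.
-/


section Aux

variable {n : ℕ} [NeZero n]

lemma fin2_cast (v : Fin 2) : ((v : ℕ) : ℝ) = 0 ∨ ((v : ℕ) : ℝ) = 1 := by
  fin_cases v <;> simp

lemma nu_nonneg {ρ : ℝ} (hρ : ρ ∈ Set.Icc (0:ℝ) 1) (η : ZMod n → Fin 2) :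
    0 ≤ nuMeasure ρ η := by
  obtain ⟨h0, h1⟩ := hρ
  refine Finset.prod_nonneg fun x _ => ?_
  rcases fin2_cast (η x) with h | h <;> rw [h] <;> nlinarith

lemma one_ne_two_zmod (hn : 4 ≤ n) : (1 : ZMod n) ≠ 2 := by
  haveI : Fact (1 < n) := ⟨by omega⟩
  intro h
  have h1 : (1 : ZMod n).val = 1 := ZMod.val_one n
  have h2 : ((2 : ℕ) : ZMod n).val = 2 := ZMod.val_natCast_of_lt (by omega)
  rw [show ((2:ℕ) : ZMod n) = 2 by push_cast; ring] at h2
  rw [h] at h1; omega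

lemma mapD_eq_swap (hn : 4 ≤ n) (η : ZMod n → Fin 2) (x : ZMod n) :
    mapD η x = η (Equiv.swap (1 : ZMod n) 2 x) := by
  have h12 := one_ne_two_zmod (n := n) hn
  simp only [mapD, Equiv.swap_apply_def]
  by_cases hx1 : x = 1
  · simp [hx1, h12]
  · by_cases hx2 : x = 2
    · subst hx2
      simp [Ne.symm h12]
    · simp [hx1, hx2]

lemma mapD_invol (hn : 4 ≤ n) (η : ZMod n → Fin 2) : mapD (mapD η) = η := by
  funext x
  rw [mapD_eq_swap hn, mapD_eq_swap hn, Equiv.swap_apply_self]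

lemma nu_mapD (hn : 4 ≤ n) (ρ : ℝ) (η : ZMod n → Fin 2) :
    nuMeasure ρ (mapD η) = nuMeasure ρ η := by
  unfold nuMeasure
  calc ∏ x : ZMod n, (ρ * ((mapD η x : ℕ) : ℝ) + (1 - ρ) * (1 - ((mapD η x : ℕ) : ℝ)))
      = ∏ x : ZMod n, (ρ * ((η (Equiv.swap (1:ZMod n) 2 x) : ℕ) : ℝ)
          + (1 - ρ) * (1 - ((η (Equiv.swap (1:ZMod n) 2 x) : ℕ) : ℝ))) := by
        refine Finset.prod_congr rfl fun x _ => ?_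
        rw [mapD_eq_swap hn]
    _ = _ := Equiv.prod_comp (Equiv.swap (1:ZMod n) 2)
        (fun y => ρ * ((η y : ℕ) : ℝ) + (1 - ρ) * (1 - ((η y : ℕ) : ℝ)))

lemma sum_mapD (hn : 4 ≤ n) (F : (ZMod n → Fin 2) → ℝ) :
    ∑ η : ZMod n → Fin 2, F (mapD η) = ∑ η : ZMod n → Fin 2, F η := by
  exact Equiv.sum_comp ((Function.Involutive.toPerm mapD (mapD_invol hn))) F

lemma marginal (ρ : ℝ) (y : ZMod n) :
    ∑ η : ZMod n → Fin 2, nuMeasure ρ η * ((η y : ℕ) : ℝ) = ρ := by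
  have step : ∀ η : ZMod n → Fin 2, nuMeasure ρ η * ((η y : ℕ) : ℝ)
      = ∏ x : ZMod n, ((ρ * ((η x : ℕ) : ℝ) + (1 - ρ) * (1 - ((η x : ℕ) : ℝ)))
          * (if x = y then ((η x : ℕ) : ℝ) else 1)) := by
    intro η
    rw [Finset.prod_mul_distrib, Finset.prod_ite_eq' Finset.univ y
      (fun x => ((η x : ℕ) : ℝ))]
    simp [nuMeasure]
  simp_rw [step]
  have := Finset.prod_univ_sum (κ := fun _ : ZMod n => Fin 2)
    (t := fun _ => Finset.univ)
    (f := fun x v => (ρ * ((v : ℕ) : ℝ) + (1 - ρ) * (1 - ((v : ℕ) : ℝ)))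
          * (if x = y then ((v : ℕ) : ℝ) else 1))
  rw [Fintype.piFinset_univ] at this
  rw [← this]
  have : ∀ x : ZMod n, (∑ v : Fin 2,
      (ρ * ((v : ℕ) : ℝ) + (1 - ρ) * (1 - ((v : ℕ) : ℝ)))
          * (if x = y then ((v : ℕ) : ℝ) else 1)) = if x = y then ρ else 1 := by
    intro x
    rw [Fin.sum_univ_two]
    by_cases hx : x = y <;> simp [hx] <;> ring
  simp_rw [this]
  rw [Finset.prod_ite_eq' Finset.univ y (fun _ => ρ)]
  simp

lemma amgm (a b c : ℝ) (hc : 0 < c) : a * b ≤ a ^ 2 / (2 * c) + c * b ^ 2 / 2 := by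
  have key : a * b ≤ (a ^ 2 + c ^ 2 * b ^ 2) / (2 * c) := by
    rw [le_div_iff₀ (by positivity)]
    nlinarith [sq_nonneg (a - c * b)]
  calc a * b ≤ (a ^ 2 + c ^ 2 * b ^ 2) / (2 * c) := key
    _ = a ^ 2 / (2 * c) + c * b ^ 2 / 2 := by field_simp

end Aux

theorem variational_bound_transposition {n : ℕ} [NeZero n] (hn : 4 ≤ n)
    (ρ : ℝ) (hρ : ρ ∈ Set.Icc (0 : ℝ) 1) (d : ℝ) (hd : 0 < d) :
    (∀ f : (ZMod n → Fin 2) → ℝ,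
      Real.sqrt n * integral ρ (fun η => (((η 1 : ℕ) : ℝ) - ((η 2 : ℕ) : ℝ)) * f η)
          - (n : ℝ) ^ 2 * (d / 2) * integral ρ (fun η => (f (mapD η) - f η) ^ 2)
        ≤ ρ / (2 * d * n))
    ∧ (⨆ f : (ZMod n → Fin 2) → ℝ,
        (Real.sqrt n * integral ρ (fun η => (((η 1 : ℕ) : ℝ) - ((η 2 : ℕ) : ℝ)) * f η)
          - (n : ℝ) ^ 2 * (d / 2) * integral ρ (fun η => (f (mapD η) - f η) ^ 2)))
        ≤ ρ / (2 * d * n) := by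
  have hn0 : 0 < n := by omega
  have hnr : (0:ℝ) < n := by exact_mod_cast hn0
  obtain ⟨hρ0, hρ1⟩ := hρ
  have main : ∀ f : (ZMod n → Fin 2) → ℝ,
      Real.sqrt n * integral ρ (fun η => (((η 1 : ℕ) : ℝ) - ((η 2 : ℕ) : ℝ)) * f η)
          - (n : ℝ) ^ 2 * (d / 2) * integral ρ (fun η => (f (mapD η) - f η) ^ 2)
        ≤ ρ / (2 * d * n) := by
    intro f
    set V : (ZMod n → Fin 2) → ℝ := fun η => ((η 1 : ℕ) : ℝ) - ((η 2 : ℕ) : ℝ) with hV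
    have h12 := one_ne_two_zmod (n := n) hn
    have hVD : ∀ η, V (mapD η) = - V η := by
      intro η
      have e1 : mapD η 1 = η 2 := by simp [mapD]
      have e2 : mapD η 2 = η 1 := by simp [mapD, Ne.symm h12]
      simp only [hV, e1, e2]
      ring
    -- symmetrization
    have hsym : integral ρ (fun η => V η * f η)
        = (1/2) * ∑ η : ZMod n → Fin 2, nuMeasure ρ η * (V η * (f η - f (mapD η))) := by
      have h1 := sum_mapD hn (fun η => nuMeasure ρ η * (V η * f η))
      have h2 : ∑ η : ZMod n → Fin 2, nuMeasure ρ (mapD η) * (V (mapD η) * f (mapD η))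
          = ∑ η : ZMod n → Fin 2, (- (nuMeasure ρ η * (V η * f (mapD η)))) := by
        refine Finset.sum_congr rfl fun η _ => ?_
        rw [nu_mapD hn, hVD]
        ring
      rw [h2, Finset.sum_neg_distrib] at h1
      have h3 : ∑ η : ZMod n → Fin 2, nuMeasure ρ η * (V η * (f η - f (mapD η)))
          = (∑ η : ZMod n → Fin 2, nuMeasure ρ η * (V η * f η))
            - ∑ η : ZMod n → Fin 2, nuMeasure ρ η * (V η * f (mapD η)) := by
        rw [← Finset.sum_sub_distrib]
        refine Finset.sum_congr rfl fun η _ => ?_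
        ring
      unfold integral
      rw [h3]
      linarith
    -- pointwise bound and summation
    have hbound : ∑ η : ZMod n → Fin 2,
          nuMeasure ρ η * (Real.sqrt n * (V η * (f η - f (mapD η))))
        ≤ ∑ η : ZMod n → Fin 2,
          nuMeasure ρ η * ((V η) ^ 2 / (2 * (n * d))
            + ((n:ℝ)^2 * d) * (f (mapD η) - f η) ^ 2 / 2) := by
      refine Finset.sum_le_sum fun η _ => ?_
      refine mul_le_mul_of_nonneg_left ?_ (nu_nonneg ⟨hρ0, hρ1⟩ η)
      have h := amgm (Real.sqrt n * V η) (f η - f (mapD η)) ((n:ℝ)^2 * d)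
        (by positivity)
      have hsq : (Real.sqrt n * V η) ^ 2 = n * (V η) ^ 2 := by
        rw [mul_pow, Real.sq_sqrt hnr.le]
      calc Real.sqrt n * (V η * (f η - f (mapD η)))
          = (Real.sqrt n * V η) * (f η - f (mapD η)) := by ring
        _ ≤ (Real.sqrt n * V η) ^ 2 / (2 * ((n:ℝ)^2 * d))
            + ((n:ℝ)^2 * d) * (f η - f (mapD η)) ^ 2 / 2 := h
        _ = (V η) ^ 2 / (2 * (n * d)) + ((n:ℝ)^2 * d) * (f (mapD η) - f η) ^ 2 / 2 := by
            rw [hsq]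
            have : (f η - f (mapD η)) ^ 2 = (f (mapD η) - f η) ^ 2 := by ring
            rw [this]
            field_simp
    -- bound on ∑ ν V²
    have hA : ∑ η : ZMod n → Fin 2, nuMeasure ρ η * (V η) ^ 2 ≤ 2 * ρ := by
      have hle : ∑ η : ZMod n → Fin 2, nuMeasure ρ η * (V η) ^ 2
          ≤ ∑ η : ZMod n → Fin 2, nuMeasure ρ η * (((η 1 : ℕ) : ℝ) + ((η 2 : ℕ) : ℝ)) := by
        refine Finset.sum_le_sum fun η _ => ?_
        refine mul_le_mul_of_nonneg_left ?_ (nu_nonneg ⟨hρ0, hρ1⟩ η)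
        rcases fin2_cast (η 1) with h1 | h1 <;> rcases fin2_cast (η 2) with h2 | h2 <;>
          simp [hV, h1, h2] <;> norm_num
      have heq : ∑ η : ZMod n → Fin 2, nuMeasure ρ η * (((η 1 : ℕ) : ℝ) + ((η 2 : ℕ) : ℝ))
          = 2 * ρ := by
        have e1 := marginal (n := n) ρ 1
        have e2 := marginal (n := n) ρ 2
        calc ∑ η : ZMod n → Fin 2, nuMeasure ρ η * (((η 1 : ℕ) : ℝ) + ((η 2 : ℕ) : ℝ))
            = (∑ η : ZMod n → Fin 2, nuMeasure ρ η * ((η 1 : ℕ) : ℝ))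
              + ∑ η : ZMod n → Fin 2, nuMeasure ρ η * ((η 2 : ℕ) : ℝ) := by
              rw [← Finset.sum_add_distrib]
              exact Finset.sum_congr rfl fun η _ => by ring
          _ = 2 * ρ := by rw [e1, e2]; ring
      linarith
    -- nonnegativity of Dirichlet form
    have hB : 0 ≤ integral ρ (fun η => (f (mapD η) - f η) ^ 2) := by
      refine Finset.sum_nonneg fun η _ => ?_
      exact mul_nonneg (nu_nonneg ⟨hρ0, hρ1⟩ η) (sq_nonneg _)
    -- assemble
    have hsplit : ∑ η : ZMod n → Fin 2,
        nuMeasure ρ η * ((V η) ^ 2 / (2 * (n * d))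
            + ((n:ℝ)^2 * d) * (f (mapD η) - f η) ^ 2 / 2)
        = (1 / (2 * (n * d))) * (∑ η : ZMod n → Fin 2, nuMeasure ρ η * (V η) ^ 2)
          + ((n:ℝ)^2 * d / 2) * integral ρ (fun η => (f (mapD η) - f η) ^ 2) := by
      unfold integral
      rw [Finset.mul_sum, Finset.mul_sum, ← Finset.sum_add_distrib]
      refine Finset.sum_congr rfl fun η _ => ?_
      ring
    have hlhs : ∑ η : ZMod n → Fin 2,
          nuMeasure ρ η * (Real.sqrt n * (V η * (f η - f (mapD η))))
        = 2 * (Real.sqrt n * integral ρ (fun η => V η * f η)) := by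
      rw [hsym]
      have hstep : ∑ η : ZMod n → Fin 2,
            nuMeasure ρ η * (Real.sqrt n * (V η * (f η - f (mapD η))))
          = Real.sqrt n * ∑ η : ZMod n → Fin 2,
              nuMeasure ρ η * (V η * (f η - f (mapD η))) := by
        rw [Finset.mul_sum]
        refine Finset.sum_congr rfl fun η _ => ?_
        ring
      rw [hstep]
      ring
    have hkey : 2 * (Real.sqrt n * integral ρ (fun η => V η * f η))
        ≤ (1 / (2 * (n * d))) * (2 * ρ)
          + ((n:ℝ)^2 * d / 2) * integral ρ (fun η => (f (mapD η) - f η) ^ 2) := by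
      rw [← hlhs]
      refine le_trans hbound ?_
      rw [hsplit]
      have h1 : (0:ℝ) < 1 / (2 * (n * d)) := by positivity
      nlinarith
    have hfinal : ρ / (2 * d * n) = (1 / (2 * (n * d))) * (2 * ρ) / 2 := by
      field_simp
    have : integral ρ (fun η => (((η 1 : ℕ) : ℝ) - ((η 2 : ℕ) : ℝ)) * f η)
        = integral ρ (fun η => V η * f η) := rfl
    rw [this, hfinal]
    have hnY : 0 ≤ (n:ℝ) ^ 2 * d / 2 * integral ρ (fun η => (f (mapD η) - f η) ^ 2) :=
      mul_nonneg (by positivity) hB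
    nlinarith [hkey, hnY, hB]
  refine ⟨main, ?_⟩
  exact ciSup_le main
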